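/- There exists a constant C > 0 (one may take C = 2/3) such that for every ε > 0 and every function u : ℝ³ → ℝ continuously differentiable on a neighborhood of the closed cube B_ε = [0,ε]³, with Γ_ε = {0} × [0,ε] × [0,ε] a face of the cube, one has |(1/ε³)·∫_{B_ε} u(x) dx − (1/ε²)·∫_{Γ_ε} u(0, x₂, x₃) dx₂ dx₃| ≤ C·ε^{−1/2}·(∫_{B_ε} |∇u(x)|² dx)^{1/2}. (The average of u over a cube of size ε differs from its average over a face by at most a constant times ε^{−1/2} times the L² norm of the gradient.) -/

import Mathlib

open MeasureTheory Set

noncomputable section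

/-- `ℝ³` with the Euclidean norm. -/
abbrev E3 := EuclideanSpace ℝ (Fin 3)

/-- The closed cube `B_ε = [0,ε]³` in `ℝ³`. -/
def Bcube (ε : ℝ) : Set E3 :=
  {x | x 0 ∈ Icc 0 ε ∧ x 1 ∈ Icc 0 ε ∧ x 2 ∈ Icc 0 ε}

/-- The point `(0, y, z)` of `ℝ³`, used to parametrize the face
`Γ_ε = {0} × [0,ε] × [0,ε]` of `B_ε`. -/
def facePt (y z : ℝ) : E3 := (WithLp.equiv 2 (Fin 3 → ℝ)).symm ![0, y, z]

/-- Cauchy–Schwarz for a finite measure: `∫ f ≤ √(μ univ) · √(∫ f²)`. -/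
lemma cs_integral {α : Type*} [MeasurableSpace α] {μ : Measure α} [IsFiniteMeasure μ]
    {f : α → ℝ} (hf : Integrable f μ) (hf2 : Integrable (fun x => f x ^ 2) μ) :
    ∫ x, f x ∂μ ≤ Real.sqrt (μ univ).toReal * Real.sqrt (∫ x, f x ^ 2 ∂μ) := by
  set A : ℝ := (μ univ).toReal with hA
  set J : ℝ := ∫ x, f x ^ 2 ∂μ with hJ
  have hA0 : 0 ≤ A := ENNReal.toReal_nonneg
  have hJ0 : 0 ≤ J := integral_nonneg fun x => sq_nonneg _
  have key : ∀ l : ℝ, 0 < l → ∫ x, f x ∂μ ≤ l / 2 * J + A / (2 * l) := by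
    intro l hl
    have h1 : ∫ x, f x ∂μ ≤ ∫ x, (l / 2 * f x ^ 2 + 1 / (2 * l)) ∂μ := by
      refine integral_mono hf ((hf2.const_mul _).add (integrable_const _)) fun x => ?_
      have h := sq_nonneg (l * f x - 1)
      have h2l : (0:ℝ) < 2 * l := by linarith
      rw [← sub_nonneg]
      have : l / 2 * f x ^ 2 + 1 / (2 * l) - f x = (l * f x - 1) ^ 2 / (2 * l) := by
        field_simp; ring
      rw [this]
      positivity
    calc ∫ x, f x ∂μ ≤ ∫ x, (l / 2 * f x ^ 2 + 1 / (2 * l)) ∂μ := h1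
      _ = l / 2 * J + A / (2 * l) := by
          rw [integral_add (hf2.const_mul _) (integrable_const _), integral_const_mul,
            integral_const, measureReal_def, smul_eq_mul]
          ring
  rcases eq_or_lt_of_le hA0 with hA' | hA'
  · have hμ : μ = 0 := by
      rcases (ENNReal.toReal_eq_zero_iff (μ univ)).mp hA'.symm with h | h
      · exact Measure.measure_univ_eq_zero.mp h
      · exact absurd h (measure_ne_top μ univ)
    simp [hμ]
    positivity
  rcases eq_or_lt_of_le hJ0 with hJ' | hJ'
  · have h0 : ∫ x, f x ∂μ ≤ 0 := by
      refine le_of_forall_pos_le_add ?_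
      intro c hc
      have hkey := key (A / (2 * c)) (by positivity)
      rw [← hJ'] at hkey
      have : A / (2 * (A / (2 * c))) = c := by field_simp
      rw [this] at hkey
      simpa using hkey
    exact h0.trans (by positivity)
  · have hkey := key (Real.sqrt A / Real.sqrt J) (by positivity)
    refine hkey.trans (le_of_eq ?_)
    have hsa : Real.sqrt A ^ 2 = A := Real.sq_sqrt hA0
    have hsj : Real.sqrt J ^ 2 = J := Real.sq_sqrt hJ0
    have hsa0 : 0 < Real.sqrt A := Real.sqrt_pos.mpr hA'
    have hsj0 : 0 < Real.sqrt J := Real.sqrt_pos.mpr hJ'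
    field_simp
    nlinarith [hsa, hsj]


/-- The parametrization of `ℝ³` by `ℝ × ℝ × ℝ`. -/
def Psi3 : (ℝ × ℝ × ℝ) ≃ᵐ E3 :=
  ((MeasurableEquiv.prodCongr (MeasurableEquiv.refl ℝ)
      (MeasurableEquiv.finTwoArrow (α := ℝ)).symm).trans
    (MeasurableEquiv.piFinSuccAbove (fun _ : Fin 3 => ℝ) 0).symm).trans
    (MeasurableEquiv.toLp 2 (Fin 3 → ℝ))

lemma Psi3_apply (t y z : ℝ) :
    Psi3 (t, y, z) = (WithLp.equiv 2 (Fin 3 → ℝ)).symm ![t, y, z] := by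
  show (MeasurableEquiv.toLp 2 (Fin 3 → ℝ))
      ((MeasurableEquiv.piFinSuccAbove (fun _ : Fin 3 => ℝ) 0).symm
        (t, (MeasurableEquiv.finTwoArrow (α := ℝ)).symm (y, z))) = _
  rw [MeasurableEquiv.coe_toLp, WithLp.equiv_symm_apply]
  congr 1
  funext i
  fin_cases i <;>
    simp [MeasurableEquiv.piFinSuccAbove, MeasurableEquiv.finTwoArrow,
      Fin.insertNthEquiv, finTwoArrowEquiv] <;> rfl

lemma Psi3_mp : MeasurePreserving Psi3 volume volume := by
  have h1 : MeasurePreserving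
      (MeasurableEquiv.prodCongr (MeasurableEquiv.refl ℝ)
        (MeasurableEquiv.finTwoArrow (α := ℝ)).symm)
      ((volume : Measure ℝ).prod ((volume : Measure ℝ).prod volume))
      ((volume : Measure ℝ).prod (volume : Measure (Fin 2 → ℝ))) :=
    (MeasurePreserving.id _).prod (volume_preserving_finTwoArrow ℝ).symm
  have h2 := (volume_preserving_piFinSuccAbove (fun _ : Fin 3 => ℝ) 0).symm
  have h3 := (EuclideanSpace.volume_preserving_symm_measurableEquiv_toLp (Fin 3)).symm
  have hcomp := h3.comp (h2.comp h1)
  have hfun : ⇑Psi3 = (MeasurableEquiv.toLp 2 (Fin 3 → ℝ)).symm.symm ∘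
      (MeasurableEquiv.piFinSuccAbove (fun _ : Fin 3 => ℝ) 0).symm ∘
      (MeasurableEquiv.prodCongr (MeasurableEquiv.refl ℝ)
        (MeasurableEquiv.finTwoArrow (α := ℝ)).symm) := rfl
  have hvol : (volume : Measure (ℝ × ℝ × ℝ)) =
      (volume : Measure ℝ).prod ((volume : Measure ℝ).prod volume) := by
    rw [← Measure.volume_eq_prod, ← Measure.volume_eq_prod]
  rw [hfun, hvol]
  exact hcomp
lemma Psi3_preimage (ε : ℝ) :
    ⇑Psi3 ⁻¹' (Bcube ε) = Icc 0 ε ×ˢ (Icc 0 ε ×ˢ Icc 0 ε) := by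
  ext ⟨t, y, z⟩
  have h0 : (Psi3 (t, y, z)) 0 = t := by rw [Psi3_apply]; rfl
  have h1 : (Psi3 (t, y, z)) 1 = y := by rw [Psi3_apply]; rfl
  have h2 : (Psi3 (t, y, z)) 2 = z := by rw [Psi3_apply]; rfl
  simp [Bcube, h0, h1, h2, and_assoc, Prod.le_def]
  tauto

lemma facePt_eq (y z : ℝ) : facePt y z = Psi3 (0, y, z) := (Psi3_apply 0 y z).symm

lemma Psi3_continuous : Continuous ⇑Psi3 := by
  have : ⇑Psi3 = fun q : ℝ × ℝ × ℝ =>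
      (WithLp.equiv 2 (Fin 3 → ℝ)).symm ![q.1, q.2.1, q.2.2] := by
    funext ⟨t, y, z⟩; exact Psi3_apply t y z
  rw [this]
  refine Continuous.comp ?_ ?_
  · exact PiLp.continuous_toLp 2 (fun _ : Fin 3 => ℝ)
  · refine continuous_pi fun i => ?_
    fin_cases i
    · exact continuous_fst
    · exact continuous_snd.fst
    · exact continuous_snd.snd

def Psi3' (t y z : ℝ) : E3 := (WithLp.equiv 2 (Fin 3 → ℝ)).symm ![t, y, z]

lemma Psi3'_mem {ε t y z : ℝ} (ht : t ∈ Icc 0 ε) (hy : y ∈ Icc 0 ε) (hz : z ∈ Icc 0 ε) :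
    Psi3' t y z ∈ Bcube ε := by
  refine ⟨?_, ?_, ?_⟩ <;> [exact ht; exact hy; exact hz]

lemma Psi3'_line (y z : ℝ) (s : ℝ) :
    Psi3' s y z = Psi3' 0 y z + s • EuclideanSpace.single (0 : Fin 3) (1:ℝ) := by
  show ((WithLp.equiv 2 (Fin 3 → ℝ)).symm ![s, y, z] : E3) = _
  refine (MeasurableEquiv.toLp 2 (Fin 3 → ℝ)).symm.injective ?_
  funext i
  fin_cases i <;>
    simp [Psi3', MeasurableEquiv.coe_toLp_symm, EuclideanSpace.single_apply,
      WithLp.equiv_symm_apply, PiLp.add_apply, PiLp.smul_apply]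

lemma line_bound {ε : ℝ} (hε : 0 < ε) {u : E3 → ℝ} {U : Set E3} (hUo : IsOpen U)
    (hBU : Bcube ε ⊆ U) (hu : ContDiffOn ℝ 1 u U)
    {t y z : ℝ} (ht : t ∈ Icc 0 ε) (hy : y ∈ Icc 0 ε) (hz : z ∈ Icc 0 ε) :
    |u (Psi3' t y z) - u (Psi3' 0 y z)| ≤
      ∫ s in Icc (0:ℝ) ε, ‖fderiv ℝ u (Psi3' s y z)‖ := by
  set e1 : E3 := EuclideanSpace.single (0 : Fin 3) (1:ℝ) with he1
  set L : ℝ → E3 := fun s => Psi3' s y z with hLdef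
  have hmemU : ∀ s ∈ Icc (0:ℝ) ε, L s ∈ U := fun s hs =>
    hBU (Psi3'_mem hs hy hz)
  have hdiff : ∀ x ∈ U, DifferentiableAt ℝ u x := fun x hx =>
    (hu.differentiableOn one_ne_zero).differentiableAt (hUo.mem_nhds hx)
  have hfc : ContinuousOn (fderiv ℝ u) U := hu.continuousOn_fderiv_of_isOpen hUo le_rfl
  have hLderiv : ∀ s : ℝ, HasDerivAt L e1 s := by
    intro s
    have h1 : HasDerivAt (fun s : ℝ => Psi3' 0 y z + s • e1) e1 s := by
      simpa using ((hasDerivAt_id s).smul_const e1).const_add (Psi3' 0 y z)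
    refine h1.congr_of_eventuallyEq (Filter.Eventually.of_forall fun s' => ?_)
    rw [hLdef]; exact Psi3'_line y z s'
  have hLcont : Continuous L := by
    have : L = fun s => Psi3' 0 y z + s • e1 := funext fun s => Psi3'_line y z s
    rw [this]; continuity
  set D : ℝ → ℝ := fun s => (fderiv ℝ u (L s)) e1 with hD
  have hDcont : ContinuousOn D (Icc (0:ℝ) ε) := by
    have h1 : ContinuousOn (fun s => fderiv ℝ u (L s)) (Icc (0:ℝ) ε) :=
      hfc.comp hLcont.continuousOn hmemU
    exact h1.clm_apply continuousOn_const
  have hsub : uIcc (0:ℝ) t ⊆ Icc (0:ℝ) ε := by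
    rw [uIcc_of_le ht.1]
    exact Icc_subset_Icc le_rfl ht.2
  have hftc : ∫ s in (0:ℝ)..t, D s = u (L t) - u (L 0) := by
    refine intervalIntegral.integral_eq_sub_of_hasDerivAt
      (f := fun s => u (L s)) (f' := D) (fun s hs => ?_)
      ((hDcont.mono hsub).intervalIntegrable)
    exact ((hdiff _ (hmemU s (hsub hs))).hasFDerivAt).comp_hasDerivAt s (hLderiv s)
  have habs : |u (L t) - u (L 0)| ≤ ∫ s in (0:ℝ)..t, |D s| := by
    rw [← hftc]
    exact intervalIntegral.abs_integral_le_integral_abs ht.1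
  have hgcont : ContinuousOn (fun s => ‖fderiv ℝ u (L s)‖) (Icc (0:ℝ) ε) :=
    (hfc.comp hLcont.continuousOn hmemU).norm
  have hmono1 : (∫ s in (0:ℝ)..t, |D s|) ≤ ∫ s in (0:ℝ)..t, ‖fderiv ℝ u (L s)‖ := by
    refine intervalIntegral.integral_mono_on ht.1 ?_ ?_ fun s hs => ?_
    · exact ((hDcont.mono hsub).abs).intervalIntegrable
    · exact (hgcont.mono hsub).intervalIntegrable
    · calc |D s| ≤ ‖fderiv ℝ u (L s)‖ * ‖e1‖ := (fderiv ℝ u (L s)).le_opNorm e1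
        _ = ‖fderiv ℝ u (L s)‖ := by
            rw [he1, EuclideanSpace.norm_single]; simp
  have hmono2 : (∫ s in (0:ℝ)..t, ‖fderiv ℝ u (L s)‖) ≤
      ∫ s in (0:ℝ)..ε, ‖fderiv ℝ u (L s)‖ := by
    refine intervalIntegral.integral_mono_interval le_rfl ht.1 ht.2 ?_ ?_
    · exact Filter.Eventually.of_forall fun s => norm_nonneg _
    · exact hgcont.intervalIntegrable_of_Icc hε.le
  have heq : (∫ s in (0:ℝ)..ε, ‖fderiv ℝ u (L s)‖) =
      ∫ s in Icc (0:ℝ) ε, ‖fderiv ℝ u (L s)‖ := by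
    rw [intervalIntegral.integral_of_le hε.le, ← integral_Icc_eq_integral_Ioc]
  calc |u (Psi3' t y z) - u (Psi3' 0 y z)| ≤ ∫ s in (0:ℝ)..t, |D s| := habs
    _ ≤ ∫ s in (0:ℝ)..t, ‖fderiv ℝ u (L s)‖ := hmono1
    _ ≤ ∫ s in (0:ℝ)..ε, ‖fderiv ℝ u (L s)‖ := hmono2
    _ = ∫ s in Icc (0:ℝ) ε, ‖fderiv ℝ u (Psi3' s y z)‖ := heq

lemma Psi3_apply' (t y z : ℝ) : Psi3 (t, y, z) = Psi3' t y z := Psi3_apply t y z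

set_option maxHeartbeats 1000000 in
/-- **Average over a cube versus average over a face.** -/
theorem cube_average_vs_face_average :
    ∃ C : ℝ, 0 < C ∧ ∀ ε : ℝ, 0 < ε → ∀ u : E3 → ℝ,
      (∃ U : Set E3, IsOpen U ∧ Bcube ε ⊆ U ∧ ContDiffOn ℝ 1 u U) →
      |(1/ε^3) * (∫ x in Bcube ε, u x) -
        (1/ε^2) * (∫ p in Icc (0:ℝ) ε ×ˢ Icc (0:ℝ) ε, u (facePt p.1 p.2))| ≤
      C / Real.sqrt ε * Real.sqrt (∫ x in Bcube ε, ‖fderiv ℝ u x‖ ^ 2) := by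
  refine ⟨1, one_pos, ?_⟩
  rintro ε hε u ⟨U, hUo, hBU, hu⟩
  set I : Set ℝ := Icc 0 ε with hI
  set S : Set (ℝ × ℝ) := I ×ˢ I with hSdef
  set Q : Set (ℝ × ℝ × ℝ) := I ×ˢ S with hQdef
  have hQpre : ⇑Psi3 ⁻¹' (Bcube ε) = Q := Psi3_preimage ε
  have hucont : ContinuousOn u U := hu.continuousOn
  have hfc : ContinuousOn (fderiv ℝ u) U := hu.continuousOn_fderiv_of_isOpen hUo le_rfl
  have hQU : ∀ q ∈ Q, Psi3 q ∈ U := by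
    intro q hq; rw [← hQpre] at hq; exact hBU hq
  have cptI : IsCompact I := isCompact_Icc
  have cptS : IsCompact S := cptI.prod cptI
  have cptQ : IsCompact Q := cptI.prod cptS
  have hmI : MeasurableSet I := measurableSet_Icc
  have hmS : MeasurableSet S := hmI.prod hmI
  have hmQ : MeasurableSet Q := hmI.prod hmS
  have h0I : (0:ℝ) ∈ I := ⟨le_rfl, hε.le⟩
  -- the functions on parameter space
  set v : ℝ × ℝ × ℝ → ℝ := fun q => u (Psi3 q) with hv
  set w : ℝ × ℝ × ℝ → ℝ := fun q => u (Psi3 (0, q.2)) with hw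
  set g : ℝ × ℝ × ℝ → ℝ := fun q => ‖fderiv ℝ u (Psi3 q)‖ with hg
  have hvc : ContinuousOn v Q := hucont.comp Psi3_continuous.continuousOn hQU
  have hgc : ContinuousOn g Q := (hfc.comp Psi3_continuous.continuousOn hQU).norm
  have hwc : ContinuousOn w Q := by
    have hcont : Continuous fun q : ℝ × ℝ × ℝ => ((0:ℝ), q.2) :=
      continuous_const.prodMk continuous_snd
    have hmaps : ∀ q ∈ Q, ((0:ℝ), q.2) ∈ Q := fun q hq => ⟨h0I, hq.2⟩
    exact (hucont.comp Psi3_continuous.continuousOn hQU).comp hcont.continuousOn hmaps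
  have hvInt : IntegrableOn v Q := hvc.integrableOn_compact cptQ
  have hwInt : IntegrableOn w Q := hwc.integrableOn_compact cptQ
  have hgInt : IntegrableOn g Q := hgc.integrableOn_compact cptQ
  have hg2Int : IntegrableOn (fun q => g q ^ 2) Q := (hgc.pow 2).integrableOn_compact cptQ
  -- transfer integrals over the cube to the parameter space
  have hcube : ∀ F : E3 → ℝ, ∫ x in Bcube ε, F x = ∫ q in Q, F (Psi3 q) := by
    intro F
    rw [← hQpre]
    exact (Psi3_mp.setIntegral_preimage_emb Psi3.measurableEmbedding F (Bcube ε)).symm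
  -- volume computations
  have hvolI : (volume I).toReal = ε := by
    rw [hI, Real.volume_Icc, sub_zero, ENNReal.toReal_ofReal hε.le]
  have hvolQ : (volume Q).toReal = ε ^ 3 := by
    rw [hQdef, Measure.volume_eq_prod, Measure.prod_prod, hSdef, Measure.volume_eq_prod,
      Measure.prod_prod, hI, Real.volume_Icc, sub_zero, ENNReal.toReal_mul, ENNReal.toReal_mul,
      ENNReal.toReal_ofReal hε.le]
    ring
  -- face integral
  set c0 : ℝ := ∫ p in S, u (Psi3 (0, p)) with hc0
  have hface : (∫ p in S, u (facePt p.1 p.2)) = c0 := by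
    rw [hc0]
    refine setIntegral_congr_fun hmS fun p hp => ?_
    rw [facePt_eq]
  -- the constant-in-t integral over Q
  have hwQ : ∫ q in Q, w q = ε * c0 := by
    have hsplit : ∫ q in Q, w q = ∫ t in I, ∫ p in S, w (t, p) := by
      rw [hQdef]
      exact setIntegral_prod _ (by rw [← hQdef]; exact hwInt)
    rw [hsplit]
    calc ∫ t in I, ∫ p in S, w (t, p) = ∫ t in I, c0 :=
          setIntegral_congr_fun hmI fun t ht => rfl
      _ = ε * c0 := by rw [setIntegral_const, measureReal_def, hvolI, smul_eq_mul]
  have hΔInt : IntegrableOn (fun q => v q - w q) Q := hvInt.sub hwInt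
  -- integral of g, and the swap identity
  set cg : ℝ := ∫ q in Q, g q with hcg
  have hswInt : IntegrableOn (fun r : (ℝ × ℝ) × ℝ => g (Prod.swap r)) (S ×ˢ I) := by
    refine (hgc.comp continuous_swap.continuousOn ?_).integrableOn_compact (cptS.prod cptI)
    rintro ⟨p, s⟩ ⟨hp, hs⟩
    exact ⟨hs, hp⟩
  have hswap : (∫ p in S, ∫ s in I, g (s, p)) = cg := by
    have hsw : MeasurePreserving (Prod.swap : (ℝ × ℝ) × ℝ → ℝ × (ℝ × ℝ))
        ((volume : Measure (ℝ × ℝ)).prod volume) ((volume : Measure ℝ).prod volume) :=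
      Measure.measurePreserving_swap
    have hpre : (Prod.swap : (ℝ × ℝ) × ℝ → ℝ × (ℝ × ℝ)) ⁻¹' Q = S ×ˢ I := by
      ext ⟨p, s⟩
      simp only [hQdef, Set.mem_preimage, Set.mem_prod, Prod.fst_swap, Prod.snd_swap]
      tauto
    have h1 : (∫ r in S ×ˢ I, g (Prod.swap r)) = ∫ q in Q, g q := by
      rw [← hpre]
      exact hsw.setIntegral_preimage_emb MeasurableEquiv.prodComm.measurableEmbedding g Q
    have h2 : (∫ r in S ×ˢ I, g (Prod.swap r)) = ∫ p in S, ∫ s in I, g (s, p) :=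
      setIntegral_prod _ hswInt
    rw [hcg, ← h1, h2]
  have hhInt : IntegrableOn (fun p => ∫ s in I, g (s, p)) S := by
    have h' : Integrable (fun r : (ℝ × ℝ) × ℝ => g (Prod.swap r))
        ((volume.restrict S).prod (volume.restrict I)) := by
      rw [Measure.prod_restrict]
      exact hswInt
    exact h'.integral_prod_left
  have hFInt : Integrable (fun t => ∫ p in S, |v (t, p) - w (t, p)|) (volume.restrict I) := by
    have h' : Integrable (fun q : ℝ × ℝ × ℝ => |v q - w q|)
        ((volume.restrict I).prod (volume.restrict S)) := by
      rw [Measure.prod_restrict]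
      exact hΔInt.abs
    exact h'.integral_prod_left
  -- the main estimate
  have hΔle : (∫ q in Q, |v q - w q|) ≤ ε * cg := by
    have hQsplit : ∫ q in Q, |v q - w q| = ∫ t in I, ∫ p in S, |v (t, p) - w (t, p)| := by
      rw [hQdef]
      exact setIntegral_prod _ (by rw [← hQdef]; exact hΔInt.abs)
    have hstep : ∀ t ∈ I, (∫ p in S, |v (t, p) - w (t, p)|) ≤ ∫ p in S, ∫ s in I, g (s, p) := by
      intro t ht
      have hΔtInt : IntegrableOn (fun p => |v (t, p) - w (t, p)|) S := by
        have hmaps : ∀ p ∈ S, (t, p) ∈ Q := fun p hp => ⟨ht, hp⟩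
        have hc1 : ContinuousOn (fun p : ℝ × ℝ => v (t, p) - w (t, p)) S := by
          refine ContinuousOn.sub ?_ ?_
          · exact hvc.comp (continuous_const.prodMk continuous_id).continuousOn hmaps
          · exact hwc.comp (continuous_const.prodMk continuous_id).continuousOn hmaps
        exact hc1.abs.integrableOn_compact cptS
      refine setIntegral_mono_on hΔtInt hhInt hmS fun p hp => ?_
      obtain ⟨y, z⟩ := p
      have hb := line_bound hε hUo hBU hu ht hp.1 hp.2
      simp only [hv, hw, hg, Psi3_apply'] at *
      exact hb
    calc (∫ q in Q, |v q - w q|)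
        = ∫ t in I, ∫ p in S, |v (t, p) - w (t, p)| := hQsplit
      _ ≤ ∫ t in I, ∫ p in S, ∫ s in I, g (s, p) := by
          refine setIntegral_mono_on hFInt ?_ hmI hstep
          refine integrableOn_const ?_
          rw [hI, Real.volume_Icc]
          exact ENNReal.ofReal_ne_top
      _ = ε * (∫ p in S, ∫ s in I, g (s, p)) := by
          rw [setIntegral_const, measureReal_def, hvolI, smul_eq_mul]
      _ = ε * cg := by rw [hswap]
  -- Cauchy–Schwarz
  haveI : IsFiniteMeasure (volume.restrict Q) :=
    ⟨by rw [Measure.restrict_apply_univ]; exact cptQ.measure_lt_top⟩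
  set G : ℝ := ∫ q in Q, g q ^ 2 with hG
  have hCS : cg ≤ Real.sqrt (ε ^ 3) * Real.sqrt G := by
    have h := cs_integral (μ := volume.restrict Q) (f := g) hgInt hg2Int
    rwa [Measure.restrict_apply_univ, hvolQ] at h
  -- put everything together
  have h1 : ∫ x in Bcube ε, u x = ∫ q in Q, v q := hcube u
  have h2 : ∫ x in Bcube ε, ‖fderiv ℝ u x‖ ^ 2 = G := hcube fun x => ‖fderiv ℝ u x‖ ^ 2
  have hdiffint : (∫ q in Q, v q) - ε * c0 = ∫ q in Q, (v q - w q) := by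
    rw [integral_sub hvInt hwInt, hwQ]
  have habs : |∫ q in Q, (v q - w q)| ≤ ∫ q in Q, |v q - w q| := by
    simpa [Real.norm_eq_abs] using
      norm_integral_le_integral_norm (μ := volume.restrict Q) fun q => v q - w q
  have hsqrt3 : Real.sqrt (ε ^ 3) = ε * Real.sqrt ε := by
    rw [pow_succ, Real.sqrt_mul (by positivity) ε, Real.sqrt_sq hε.le]
  have hne : ε ≠ 0 := hε.ne'
  have hGnn : (0:ℝ) ≤ Real.sqrt G := Real.sqrt_nonneg _
  have hsε : (0:ℝ) < Real.sqrt ε := Real.sqrt_pos.mpr hε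
  have hkey : |(1/ε^3) * (∫ q in Q, v q) - (1/ε^2) * c0|
      = (1/ε^3) * |(∫ q in Q, v q) - ε * c0| := by
    have hfactor : (1/ε^3) * (∫ q in Q, v q) - (1/ε^2) * c0
        = (1/ε^3) * ((∫ q in Q, v q) - ε * c0) := by
      field_simp
    rw [hfactor, abs_mul, abs_of_pos (show (0:ℝ) < 1/ε^3 by positivity)]
  rw [hface, h1, h2, hkey, hdiffint]
  calc (1/ε^3) * |∫ q in Q, (v q - w q)|
      ≤ (1/ε^3) * (ε * cg) := by
        refine mul_le_mul_of_nonneg_left (habs.trans hΔle) (by positivity)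
    _ ≤ (1/ε^3) * (ε * (ε * Real.sqrt ε * Real.sqrt G)) := by
        refine mul_le_mul_of_nonneg_left (mul_le_mul_of_nonneg_left ?_ hε.le) (by positivity)
        rw [← hsqrt3]
        exact hCS
    _ = 1 / Real.sqrt ε * Real.sqrt G := by
        set s : ℝ := Real.sqrt ε with hs
        have h : s * s = ε := Real.mul_self_sqrt hε.le
        rw [← h]
        have hs0 : s ≠ 0 := ne_of_gt hsε
        field_simp
end
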